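/- arXiv:1901.00130 — 2 statements merged into one kernel-verified Lean document; each statement's English description precedes it below -/
import Mathlib

section
/- Let N* ∈ ℕ and let {A_k}_{k=1}^{(N*)^d} and {ξ_k} be the sub-cubes and centers of the standard partition of 𝕀^d, with g and g_k as in the bump-function construction. Then for every sign vector ε = (ε_1, …, ε_{(N*)^d}) ∈ {−1,1}^{(N*)^d}, the function f(x) := Σ_{k=1}^{(N*)^d} ε_k g_k(x) belongs to Lip^{(r,c_0)}. -/
open MeasureTheory

noncomputable section

/-- The cube `𝕀^d = [-1,1]^d` in Euclidean space. -/
def cube (d : ℕ) : Set (EuclideanSpace ℝ (Fin d)) := { x | ∀ i, |x i| ≤ 1 }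

/-- Partial derivative of `f` in the `i`-th coordinate direction. -/
def pderiv' {d : ℕ} (i : Fin d) (f : EuclideanSpace ℝ (Fin d) → ℝ) :
    EuclideanSpace ℝ (Fin d) → ℝ :=
  fun x => fderiv ℝ f x (EuclideanSpace.single i 1)

/-- Iterated partial derivative of `f` along the list of coordinate directions `l`
(a list of length `s` corresponds to a multi-index `α` with `|α| = s`). -/
def iterPD {d : ℕ} : List (Fin d) → (EuclideanSpace ℝ (Fin d) → ℝ) →
    EuclideanSpace ℝ (Fin d) → ℝ
  | [], f => f
  | i :: l, f => iterPD l (pderiv' i f)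

/-- The class `Lip^{(r,c₀)}` (with `r = s + v`, `0 < v ≤ 1`) of `(r,c₀)`-smooth
functions on `𝕀^d` : `f` is `s`-times differentiable and every `s`-th order
partial derivative is `v`-Hölder continuous on `𝕀^d` with constant `c₀`
(with respect to the Euclidean norm). -/
def LipClass (d s : ℕ) (v c0 : ℝ) : Set (EuclideanSpace ℝ (Fin d) → ℝ) :=
  { f | ContDiff ℝ s f ∧
      ∀ l : List (Fin d), l.length = s →
        ∀ x ∈ cube d, ∀ y ∈ cube d,
          |iterPD l f x - iterPD l f y| ≤ c0 * ‖x - y‖ ^ v }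

/-- The center `ξ_k` of the sub-cube `A_k` of the partition of `𝕀^d` into `N^d`
congruent sub-cubes of side length `2/N`; sub-cubes are indexed by `k : Fin d → Fin N`. -/
def ξ (d N : ℕ) (k : Fin d → Fin N) : EuclideanSpace ℝ (Fin d) :=
  WithLp.toLp 2 (fun i => -1 + (2 * ((k i : ℕ) : ℝ) + 1) / N)

/-- The localized bump `g_k(x) = N^{-r} g(N(x - ξ_k))`. -/
def bumpAt (d N : ℕ) (r : ℝ) (g : EuclideanSpace ℝ (Fin d) → ℝ)
    (k : Fin d → Fin N) (x : EuclideanSpace ℝ (Fin d)) : ℝ :=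
  ((N : ℝ) ^ (-r)) * g ((N : ℝ) • (x - ξ d N k))

section Aux

variable {d : ℕ}

lemma pderiv'_contDiff {n : ℕ} {f : EuclideanSpace ℝ (Fin d) → ℝ}
    (hf : ContDiff ℝ (n + 1 : ℕ) f) (i : Fin d) : ContDiff ℝ (n : ℕ) (pderiv' i f) := by
  have h1 : ContDiff ℝ (n : ℕ) (fderiv ℝ f) :=
    hf.fderiv_right (by exact_mod_cast le_rfl)
  exact h1.clm_apply contDiff_const

lemma iterPD_contDiff (l : List (Fin d)) {n : ℕ} {f : EuclideanSpace ℝ (Fin d) → ℝ}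
    (hf : ContDiff ℝ (l.length + n : ℕ) f) : ContDiff ℝ (n : ℕ) (iterPD l f) := by
  induction l generalizing f with
  | nil => simpa [iterPD] using hf
  | cons i l ih =>
    rw [iterPD]
    apply ih
    apply pderiv'_contDiff (n := l.length + n) ?_ i
    have : (i :: l).length + n = (l.length + n) + 1 := by simp; omega
    rw [this] at hf
    exact hf

lemma pderiv'_sum {ι : Type*} [Fintype ι] (f : ι → EuclideanSpace ℝ (Fin d) → ℝ)
    (hf : ∀ k, Differentiable ℝ (f k)) (i : Fin d) :
    pderiv' i (fun x => ∑ k, f k x) = fun x => ∑ k, pderiv' i (f k) x := by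
  funext x
  simp only [pderiv']
  rw [fderiv_fun_sum (fun k _ => (hf k).differentiableAt)]
  simp

lemma pderiv'_const_mul (c : ℝ) (f : EuclideanSpace ℝ (Fin d) → ℝ)
    (hf : Differentiable ℝ f) (i : Fin d) :
    pderiv' i (fun x => c * f x) = fun x => c * pderiv' i f x := by
  funext x
  simp only [pderiv']
  rw [fderiv_const_mul (hf.differentiableAt) c]
  simp

lemma pderiv'_comp_smul (a : ℝ) (b : EuclideanSpace ℝ (Fin d))
    (f : EuclideanSpace ℝ (Fin d) → ℝ) (hf : Differentiable ℝ f) (i : Fin d) :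
    pderiv' i (fun x => f (a • x + b)) = fun x => a * pderiv' i f (a • x + b) := by
  funext x
  have hA : HasFDerivAt (fun x : EuclideanSpace ℝ (Fin d) => a • x + b)
      (a • ContinuousLinearMap.id ℝ (EuclideanSpace ℝ (Fin d))) x :=
    ((hasFDerivAt_id x).const_smul a).add_const b
  have hc : HasFDerivAt (fun x : EuclideanSpace ℝ (Fin d) => f (a • x + b))
      ((fderiv ℝ f (a • x + b)).comp (a • ContinuousLinearMap.id ℝ (EuclideanSpace ℝ (Fin d)))) x :=
    (hf (a • x + b)).hasFDerivAt.comp x hA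
  simp only [pderiv', hc.fderiv]
  simp [_root_.map_smul, smul_eq_mul]

lemma contDiff_affine (n : WithTop ℕ∞) (a : ℝ) (b : EuclideanSpace ℝ (Fin d)) :
    ContDiff ℝ n (fun x : EuclideanSpace ℝ (Fin d) => a • x + b) :=
  (contDiff_id.const_smul a).add contDiff_const

lemma one_le_cast_succ (m : ℕ) : (1 : WithTop ℕ∞) ≤ ((m + 1 : ℕ) : WithTop ℕ∞) := by
  exact_mod_cast Nat.le_add_left 1 m

lemma iterPD_const_mul (l : List (Fin d)) (c : ℝ) (f : EuclideanSpace ℝ (Fin d) → ℝ)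
    (hf : ContDiff ℝ (l.length : ℕ) f) :
    iterPD l (fun x => c * f x) = fun x => c * iterPD l f x := by
  induction l generalizing f with
  | nil => simp [iterPD]
  | cons i l ih =>
    have hf' : ContDiff ℝ (l.length + 1 : ℕ) f := by simpa using hf
    have hd1 : Differentiable ℝ f := hf'.differentiable (by simp)
    rw [iterPD, pderiv'_const_mul c f hd1 i, iterPD]
    exact ih _ (pderiv'_contDiff hf' i)

lemma iterPD_sum {ι : Type*} [Fintype ι] (l : List (Fin d))
    (f : ι → EuclideanSpace ℝ (Fin d) → ℝ)
    (hf : ∀ k, ContDiff ℝ (l.length : ℕ) (f k)) :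
    iterPD l (fun x => ∑ k, f k x) = fun x => ∑ k, iterPD l (f k) x := by
  induction l generalizing f with
  | nil => simp [iterPD]
  | cons i l ih =>
    have hf' : ∀ k, ContDiff ℝ (l.length + 1 : ℕ) (f k) := fun k => by simpa using hf k
    rw [iterPD, pderiv'_sum f (fun k => (hf' k).differentiable (by simp)) i]
    rw [ih _ (fun k => pderiv'_contDiff (hf' k) i)]
    rfl

lemma iterPD_comp_smul (l : List (Fin d)) (a : ℝ) (b : EuclideanSpace ℝ (Fin d))
    (f : EuclideanSpace ℝ (Fin d) → ℝ) (hf : ContDiff ℝ (l.length : ℕ) f) :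
    iterPD l (fun x => f (a • x + b)) = fun x => a ^ l.length * iterPD l f (a • x + b) := by
  induction l generalizing f with
  | nil => simp [iterPD]
  | cons i l ih =>
    have hf' : ContDiff ℝ (l.length + 1 : ℕ) f := by simpa using hf
    have hd1 : Differentiable ℝ f := hf'.differentiable (by simp)
    rw [iterPD, pderiv'_comp_smul a b f hd1 i, iterPD]
    have hcd : ContDiff ℝ (l.length : ℕ) (fun x => pderiv' i f (a • x + b)) :=
      (pderiv'_contDiff hf' i).comp (contDiff_affine _ a b)
    rw [iterPD_const_mul l a _ hcd, ih _ (pderiv'_contDiff hf' i)]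
    funext x
    simp [List.length_cons, pow_succ]
    ring

lemma iterPD_eq_zero_of_eqOn_zero {U : Set (EuclideanSpace ℝ (Fin d))} (hU : IsOpen U)
    (l : List (Fin d)) :
    ∀ (f : EuclideanSpace ℝ (Fin d) → ℝ), (∀ x ∈ U, f x = 0) → ∀ x ∈ U, iterPD l f x = 0 := by
  induction l with
  | nil => intro f hf x hx; exact hf x hx
  | cons i l ih =>
    intro f hf x hx
    rw [iterPD]
    apply ih (pderiv' i f) ?_ x hx
    intro y hy
    have hev : f =ᶠ[nhds y] fun _ => (0 : ℝ) :=
      Filter.eventuallyEq_of_mem (hU.mem_nhds hy) hf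
    simp [pderiv', hev.fderiv_eq]

/-- 1-D crossing lemma, monotone case. -/
lemma seg_aux_le {xi yi c0i c1i δ h2 : ℝ} (hδ : 0 < δ) (hδh : δ ≤ h2)
    (hx : |xi - c0i| < δ) (hy : |yi - c1i| < δ) (hc : c0i + 2 * h2 ≤ c1i) :
    ∃ t : ℝ, 0 ≤ t ∧ t ≤ 1 ∧ δ ≤ |(xi + t * (yi - xi)) - c0i| ∧
      δ ≤ |(xi + t * (yi - xi)) - c1i| := by
  rw [abs_lt] at hx hy
  set α := c0i + δ with hα
  have hxα : xi < α := by simp [hα]; linarith [hx.2]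
  have hyα : α < yi := by simp [hα]; linarith [hy.1]
  have hden : 0 < yi - xi := by linarith
  refine ⟨(α - xi) / (yi - xi), le_of_lt (div_pos (by linarith) hden), ?_, ?_, ?_⟩
  · rw [div_le_one hden]; linarith
  · have : xi + (α - xi) / (yi - xi) * (yi - xi) = α := by field_simp; ring
    rw [this, hα]
    rw [show c0i + δ - c0i = δ by ring, abs_of_pos hδ]
  · have : xi + (α - xi) / (yi - xi) * (yi - xi) = α := by field_simp; ring
    rw [this, abs_sub_comm, abs_of_nonneg (by linarith), hα]
    linarith

lemma seg_aux {xi yi c0i c1i δ h2 : ℝ} (hδ : 0 < δ) (hδh : δ ≤ h2)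
    (hx : |xi - c0i| < δ) (hy : |yi - c1i| < δ) (hc : 2 * h2 ≤ |c0i - c1i|) :
    ∃ t : ℝ, 0 ≤ t ∧ t ≤ 1 ∧ δ ≤ |(xi + t * (yi - xi)) - c0i| ∧
      δ ≤ |(xi + t * (yi - xi)) - c1i| := by
  rcases le_total c0i c1i with h | h
  · apply seg_aux_le hδ hδh hx hy
    rw [abs_sub_comm, abs_of_nonneg (by linarith)] at hc; linarith
  · have hc' : (-c0i) + 2 * h2 ≤ -c1i := by
      rw [abs_of_nonneg (by linarith)] at hc; linarith
    obtain ⟨t, ht0, ht1, h1, h2'⟩ := seg_aux_le (xi := -xi) (yi := -yi) (c0i := -c0i)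
      (c1i := -c1i) hδ hδh (by rw [show -xi - -c0i = -(xi - c0i) by ring, abs_neg]; exact hx)
      (by rw [show -yi - -c1i = -(yi - c1i) by ring, abs_neg]; exact hy) hc'
    refine ⟨t, ht0, ht1, ?_, ?_⟩
    · rw [show -xi + t * (-yi - -xi) - -c0i = -((xi + t * (yi - xi)) - c0i) by ring, abs_neg] at h1
      exact h1
    · rw [show -xi + t * (-yi - -xi) - -c1i = -((xi + t * (yi - xi)) - c1i) by ring, abs_neg] at h2'
      exact h2'

/-- Concavity consequence: `t^v + (1-t)^v ≤ 2^(1-v)` for `t ∈ [0,1]`, `0 < v ≤ 1`. -/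
lemma rpow_concave_bound {v t : ℝ} (hv : 0 < v) (hv1 : v ≤ 1) (ht0 : 0 ≤ t) (ht1 : t ≤ 1) :
    t ^ v + (1 - t) ^ v ≤ 2 ^ (1 - v) := by
  have hconc := (Real.concaveOn_rpow hv.le hv1).2 (Set.mem_Ici.mpr ht0)
    (Set.mem_Ici.mpr (by linarith : (0:ℝ) ≤ 1 - t)) (by norm_num : (0:ℝ) ≤ 1/2)
    (by norm_num : (0:ℝ) ≤ 1/2) (by norm_num)
  have harg : (1/2 : ℝ) • t + (1/2 : ℝ) • (1 - t) = 1/2 := by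
    simp [smul_eq_mul]; ring
  rw [harg] at hconc
  have h12 : ((1:ℝ)/2) ^ v = 2 ^ (-v) := by
    rw [show (1:ℝ)/2 = 2⁻¹ by norm_num, Real.inv_rpow (by norm_num),
      ← Real.rpow_neg (by norm_num)]
  have h2v : (2:ℝ) ^ (1 - v) = 2 * 2 ^ (-v) := by
    rw [show (1:ℝ) - v = 1 + -v by ring, Real.rpow_add (by norm_num), Real.rpow_one]
  rw [h2v, ← h12]
  simp only [smul_eq_mul] at hconc
  linarith

lemma nat_cast_abs_ge_one {a b : ℕ} (h : a ≠ b) : (1:ℝ) ≤ |(a:ℝ) - (b:ℝ)| := by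
  have h1 : (a:ℤ) ≠ (b:ℤ) := by exact_mod_cast h
  have h2 : (1:ℤ) ≤ |(a:ℤ) - (b:ℤ)| := Int.one_le_abs (sub_ne_zero.mpr h1)
  exact_mod_cast h2

end Aux

/-- Lemma 5 of the paper: for every sign vector
`ε ∈ {-1,1}^{N^d}`, the function `f = Σ_k ε_k g_k` built from the bump-function
construction belongs to `Lip^{(r,c₀)}`. Here `g` is `s`-times differentiable,
supported in `[-1/√d, 1/√d]^d`, equal to `1` on `[-1/(2√d), 1/(2√d)]^d`, and all of
its `s`-th order partial derivatives are `v`-Hölder with constant `c₀ 2^{v-1}`. -/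
theorem stmt9 (d s N : ℕ) (hd : 1 ≤ d) (hN : 1 ≤ N) (v c0 r : ℝ) (hv : 0 < v)
    (hv1 : v ≤ 1) (hc0 : 0 < c0) (hr : r = s + v)
    (g : EuclideanSpace ℝ (Fin d) → ℝ)
    (hg_smooth : ContDiff ℝ s g)
    (hg_supp : ∀ x, g x ≠ 0 → ∀ i, |x i| ≤ 1 / Real.sqrt d)
    (hg_one : ∀ x : EuclideanSpace ℝ (Fin d),
      (∀ i, |x i| ≤ 1 / (2 * Real.sqrt d)) → g x = 1)
    (hg_holder : ∀ l : List (Fin d), l.length = s →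
      ∀ x y : EuclideanSpace ℝ (Fin d),
        |iterPD l g x - iterPD l g y| ≤ c0 * (2 : ℝ) ^ (v - 1) * ‖x - y‖ ^ v)
    (e : (Fin d → Fin N) → ℝ) (he : ∀ k, e k = 1 ∨ e k = -1) :
    (fun x => ∑ k : Fin d → Fin N, e k * bumpAt d N r g k x) ∈ LipClass d s v c0 := by
  have hN0 : (0:ℝ) < N := by exact_mod_cast hN
  have hsd1 : (1:ℝ) ≤ Real.sqrt d := by
    rw [show (1:ℝ) = Real.sqrt 1 by simp]
    exact Real.sqrt_le_sqrt (by exact_mod_cast hd)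
  have hsd0 : (0:ℝ) < Real.sqrt d := by linarith
  set κ : ℝ := (N:ℝ) ^ (-r) with hκdef
  have hκ0 : (0:ℝ) < κ := Real.rpow_pos_of_pos hN0 _
  constructor
  · -- smoothness
    apply ContDiff.sum
    intro k _
    simp only [bumpAt]
    exact contDiff_const.mul (contDiff_const.mul
      (hg_smooth.comp ((contDiff_id.sub contDiff_const).const_smul ((N:ℝ)))))
  · intro l hl x hx y hy
    set G : EuclideanSpace ℝ (Fin d) → ℝ := iterPD l g with hGdef
    set C : ℝ := c0 * 2 ^ (v - 1) with hCdef
    have hC0 : 0 < C := mul_pos hc0 (Real.rpow_pos_of_pos two_pos _)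
    have hC_le : C ≤ c0 := by
      have h2 : (2:ℝ) ^ (v-1) ≤ 1 :=
        Real.rpow_le_one_of_one_le_of_nonpos one_le_two (by linarith)
      rw [hCdef]; nlinarith
    have hHG : ∀ a b, |G a - G b| ≤ C * ‖a - b‖ ^ v := hg_holder l hl
    have hgs : ContDiff ℝ (l.length : ℕ) g := by rw [hl]; exact hg_smooth
    -- vanishing of G outside the open support cube
    have hGzero : ∀ z : EuclideanSpace ℝ (Fin d), ∀ i : Fin d,
        1 / Real.sqrt d ≤ |z i| → G z = 0 := by
      intro z i hz
      have hUopen : IsOpen {w : EuclideanSpace ℝ (Fin d) | 1 / Real.sqrt d < |w i|} := by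
        have hco : Continuous fun w : EuclideanSpace ℝ (Fin d) => |w i| := by
          have h1 : Continuous fun w : EuclideanSpace ℝ (Fin d) => w i :=
            by fun_prop
          exact h1.abs
        exact isOpen_lt continuous_const hco
      have hgU : ∀ w ∈ {w : EuclideanSpace ℝ (Fin d) | 1 / Real.sqrt d < |w i|}, g w = 0 := by
        intro w hw; by_contra hgw
        exact absurd (hg_supp w hgw i) (not_le.mpr hw)
      have hGU : ∀ w ∈ {w : EuclideanSpace ℝ (Fin d) | 1 / Real.sqrt d < |w i|}, G w = 0 :=
        iterPD_eq_zero_of_eqOn_zero hUopen l g hgU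
      have key : ∀ ε : ℝ, 0 < ε → |G z| ≤ C * ε ^ v := by
        intro ε hε
        set c1 : ℝ := if 0 ≤ z i then (1:ℝ) else -1 with hc1
        set u := EuclideanSpace.single i c1 with hu
        have hnu : ‖u‖ = 1 := by
          rw [hu, EuclideanSpace.norm_single, hc1]
          split <;> norm_num
        have hcoord : (z + ε • u) i = z i + ε * c1 := by
          rw [hu]
          simp [EuclideanSpace.single_apply]
        have habs : |(z + ε • u) i| = |z i| + ε := by
          rw [hcoord, hc1]
          rcases le_or_gt 0 (z i) with h | h
          · rw [if_pos h, mul_one, abs_of_nonneg h, abs_of_nonneg (by linarith)]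
          · rw [if_neg (not_le.mpr h), mul_neg_one, abs_of_neg h,
              abs_of_neg (by linarith : z i + -ε < 0)]
            ring
        have hmem : z + ε • u ∈ {w : EuclideanSpace ℝ (Fin d) | 1 / Real.sqrt d < |w i|} := by
          show 1 / Real.sqrt d < |(z + ε • u) i|
          rw [habs]; linarith
        have h1 := hHG z (z + ε • u)
        rw [hGU _ hmem, sub_zero, sub_add_cancel_left, norm_neg, norm_smul,
          hnu, mul_one, Real.norm_eq_abs, abs_of_pos hε] at h1
        exact h1
      by_contra hGz
      have h0 : 0 < |G z| := abs_pos.mpr hGz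
      have hpos : 0 < |G z| / (2 * C) := by positivity
      have hε0pos : 0 < (|G z| / (2 * C)) ^ (1/v) := Real.rpow_pos_of_pos hpos _
      have hεv : ((|G z| / (2 * C)) ^ (1/v)) ^ v = |G z| / (2 * C) := by
        rw [← Real.rpow_mul hpos.le, one_div, inv_mul_cancel₀ (ne_of_gt hv), Real.rpow_one]
      have hk := key _ hε0pos
      rw [hεv] at hk
      have heq : C * (|G z| / (2 * C)) = |G z| / 2 := by
        field_simp
      rw [heq] at hk
      linarith
    -- geometry of the sub-cubes
    set δ : ℝ := 1 / ((N:ℝ) * Real.sqrt d) with hδdef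
    have hδ0 : 0 < δ := by rw [hδdef]; positivity
    have hδN : δ ≤ 1 / (N:ℝ) := by
      rw [hδdef]
      apply one_div_le_one_div_of_le hN0
      nlinarith
    set Φ : (Fin d → Fin N) → EuclideanSpace ℝ (Fin d) → ℝ :=
      fun k w => G ((N:ℝ) • w + (-((N:ℝ) • ξ d N k))) with hΦdef
    have hcoordΦ : ∀ (k : Fin d → Fin N) (w : EuclideanSpace ℝ (Fin d)) (i : Fin d),
        ((N:ℝ) • w + (-((N:ℝ) • ξ d N k))) i = (N:ℝ) * (w i - ξ d N k i) := by
      intro k w i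
      simp only [PiLp.add_apply, PiLp.neg_apply, PiLp.smul_apply, smul_eq_mul]
      ring
    have hΦzero : ∀ (k : Fin d → Fin N) w, (∃ i : Fin d, δ ≤ |w i - ξ d N k i|) → Φ k w = 0 := by
      rintro k w ⟨i, hi⟩
      apply hGzero _ i
      rw [hcoordΦ, abs_mul, abs_of_pos hN0]
      rw [hδdef] at hi
      calc 1 / Real.sqrt d = (N:ℝ) * (1 / ((N:ℝ) * Real.sqrt d)) := by field_simp
        _ ≤ (N:ℝ) * |w i - ξ d N k i| := mul_le_mul_of_nonneg_left hi hN0.le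
    have hΦsmall : ∀ (k : Fin d → Fin N) w, Φ k w ≠ 0 → ∀ i, |w i - ξ d N k i| < δ := by
      intro k w h i
      by_contra hge
      exact h (hΦzero k w ⟨i, not_lt.mp hge⟩)
    have hξsep : ∀ k k' : Fin d → Fin N, ∀ i, k i ≠ k' i →
        2/(N:ℝ) ≤ |ξ d N k i - ξ d N k' i| := by
      intro k k' i hi
      have h1 : ξ d N k i - ξ d N k' i = 2 * (((k i : ℕ):ℝ) - ((k' i : ℕ):ℝ)) / N := by
        simp only [ξ, WithLp.ofLp_toLp]
        ring
      have h2 : (1:ℝ) ≤ |((k i : ℕ):ℝ) - ((k' i : ℕ):ℝ)| :=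
        nat_cast_abs_ge_one (fun hh => hi (Fin.val_injective hh))
      rw [h1, abs_div, abs_of_pos hN0, abs_mul, abs_two, div_le_div_iff₀ hN0 hN0]
      nlinarith
    have huniq : ∀ (w : EuclideanSpace ℝ (Fin d)) k k', Φ k w ≠ 0 → Φ k' w ≠ 0 → k = k' := by
      intro w k k' h h'
      by_contra hne
      obtain ⟨i, hi⟩ : ∃ i, k i ≠ k' i := by
        by_contra hall
        push_neg at hall
        exact hne (funext hall)
      have h1 := hΦsmall k w h i
      have h2 := hΦsmall k' w h' i
      have h3 := hξsep k k' i hi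
      have h4 : |ξ d N k i - ξ d N k' i| ≤ |ξ d N k i - w i| + |w i - ξ d N k' i| :=
        abs_sub_le _ _ _
      rw [abs_sub_comm (ξ d N k i) (w i)] at h4
      have h5 : (2:ℝ)/N = 2 * (1/(N:ℝ)) := by ring
      linarith
    -- the derivative formula
    set c2 : ℝ := (N:ℝ) ^ l.length with hc2
    have hc2pos : 0 < c2 := pow_pos hN0 _
    have hF : ∀ w, iterPD l (fun x => ∑ k : Fin d → Fin N, e k * bumpAt d N r g k x) w
        = ∑ k : Fin d → Fin N, (e k * κ) * (c2 * Φ k w) := by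
      have hfeq : (fun x : EuclideanSpace ℝ (Fin d) =>
            ∑ k : Fin d → Fin N, e k * bumpAt d N r g k x)
          = fun x => ∑ k : Fin d → Fin N,
              (e k * κ) * g ((N:ℝ) • x + (-((N:ℝ) • ξ d N k))) := by
        funext w
        refine Finset.sum_congr rfl fun k _ => ?_
        have harg : (N:ℝ) • (w - ξ d N k) = (N:ℝ) • w + -((N:ℝ) • ξ d N k) := by
          module
        simp only [bumpAt, harg, hκdef]
        ring
      have hgA : ∀ k : Fin d → Fin N, ContDiff ℝ (l.length : ℕ)
          (fun x : EuclideanSpace ℝ (Fin d) => g ((N:ℝ) • x + -((N:ℝ) • ξ d N k))) :=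
        fun k => hgs.comp (contDiff_affine _ _ _)
      intro w
      rw [hfeq]
      rw [iterPD_sum l
        (fun k => fun x => (e k * κ) * g ((N:ℝ) • x + (-((N:ℝ) • ξ d N k))))
        (fun k => contDiff_const.mul (hgA k))]
      refine Finset.sum_congr rfl fun k _ => ?_
      rw [iterPD_const_mul l (e k * κ) _ (hgA k)]
      rw [iterPD_comp_smul l ((N:ℝ)) (-((N:ℝ) • ξ d N k)) g hgs]
    have heκ : ∀ k, |e k * κ| = κ := by
      intro k; rcases he k with h | h <;> rw [h] <;> simp [abs_of_pos hκ0]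
    have hκc2Nv : κ * c2 * (N:ℝ) ^ v = 1 := by
      rw [hκdef, hc2, hl, ← Real.rpow_natCast (N:ℝ) s, ← Real.rpow_add hN0, ← Real.rpow_add hN0,
        show -r + (s:ℝ) + v = 0 by rw [hr]; ring, Real.rpow_zero]
    have hΦH : ∀ (k : Fin d → Fin N) w w',
        |Φ k w - Φ k w'| ≤ C * ((N:ℝ) ^ v * ‖w - w'‖ ^ v) := by
      intro k w w'
      have h1 := hHG ((N:ℝ) • w + (-((N:ℝ) • ξ d N k))) ((N:ℝ) • w' + (-((N:ℝ) • ξ d N k)))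
      have h2 : ((N:ℝ) • w + (-((N:ℝ) • ξ d N k))) - ((N:ℝ) • w' + (-((N:ℝ) • ξ d N k)))
          = (N:ℝ) • (w - w') := by module
      rw [h2, norm_smul, Real.norm_eq_abs, abs_of_pos hN0,
        Real.mul_rpow hN0.le (norm_nonneg _), ← mul_assoc] at h1
      rw [hΦdef]
      calc |G ((N:ℝ) • w + -((N:ℝ) • ξ d N k)) - G ((N:ℝ) • w' + -((N:ℝ) • ξ d N k))|
          ≤ C * (N:ℝ) ^ v * ‖w - w'‖ ^ v := h1
        _ = C * ((N:ℝ) ^ v * ‖w - w'‖ ^ v) := by ring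
    -- basic single-bump estimate
    have hsingle : ∀ (k0 : Fin d → Fin N) (w w' : EuclideanSpace ℝ (Fin d)), Φ k0 w' = 0 →
        κ * c2 * |Φ k0 w| ≤ c0 * ‖w - w'‖ ^ v := by
      intro k0 w w' h0
      have h1 := hΦH k0 w w'
      rw [h0, sub_zero] at h1
      calc κ * c2 * |Φ k0 w| ≤ κ * c2 * (C * ((N:ℝ) ^ v * ‖w - w'‖ ^ v)) :=
            mul_le_mul_of_nonneg_left h1 (by positivity)
        _ = C * (κ * c2 * (N:ℝ) ^ v) * ‖w - w'‖ ^ v := by ring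
        _ = C * ‖w - w'‖ ^ v := by rw [hκc2Nv]; ring
        _ ≤ c0 * ‖w - w'‖ ^ v :=
            mul_le_mul_of_nonneg_right hC_le (Real.rpow_nonneg (norm_nonneg _) _)
    -- sum collapsing
    have hsum_active : ∀ (w : EuclideanSpace ℝ (Fin d)) (k0 : Fin d → Fin N), Φ k0 w ≠ 0 →
        ∑ k : Fin d → Fin N, (e k * κ) * (c2 * Φ k w) = (e k0 * κ) * (c2 * Φ k0 w) := by
      intro w k0 h
      apply Finset.sum_eq_single_of_mem k0 (Finset.mem_univ _)
      intro k _ hk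
      have hzk : Φ k w = 0 := by
        by_contra h'
        exact hk (huniq w k k0 h' h)
      rw [hzk]; ring
    have hsum_zero : ∀ (w : EuclideanSpace ℝ (Fin d)), (∀ k, Φ k w = 0) →
        ∑ k : Fin d → Fin N, (e k * κ) * (c2 * Φ k w) = 0 := by
      intro w h
      apply Finset.sum_eq_zero
      intro k _; rw [h k]; ring
    have hrpow0 : (0:ℝ) ≤ ‖x - y‖ ^ v := Real.rpow_nonneg (norm_nonneg _) _
    have habs : ∀ (k : Fin d → Fin N) (tΦ : ℝ), |(e k * κ) * (c2 * tΦ)| = κ * c2 * |tΦ| := by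
      intro k tΦ
      rw [abs_mul, heκ k, abs_mul, abs_of_pos hc2pos]
      ring
    rw [hF x, hF y]
    by_cases hx1 : ∃ k0, Φ k0 x ≠ 0
    · obtain ⟨k0, hk0⟩ := hx1
      by_cases hy1 : ∃ k1, Φ k1 y ≠ 0
      · obtain ⟨k1, hk1⟩ := hy1
        rw [hsum_active x k0 hk0, hsum_active y k1 hk1]
        by_cases heq : k0 = k1
        · subst heq
          have h1 : (e k0 * κ) * (c2 * Φ k0 x) - (e k0 * κ) * (c2 * Φ k0 y)
              = ((e k0 * κ) * c2) * (Φ k0 x - Φ k0 y) := by ring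
          rw [h1, abs_mul, abs_mul, heκ k0, abs_of_pos hc2pos]
          calc κ * c2 * |Φ k0 x - Φ k0 y| ≤ κ * c2 * (C * ((N:ℝ) ^ v * ‖x - y‖ ^ v)) :=
                mul_le_mul_of_nonneg_left (hΦH k0 x y) (by positivity)
            _ = C * (κ * c2 * (N:ℝ) ^ v) * ‖x - y‖ ^ v := by ring
            _ = C * ‖x - y‖ ^ v := by rw [hκc2Nv]; ring
            _ ≤ c0 * ‖x - y‖ ^ v := mul_le_mul_of_nonneg_right hC_le hrpow0
        · obtain ⟨i, hi⟩ : ∃ i, k0 i ≠ k1 i := by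
            by_contra hall
            push_neg at hall
            exact heq (funext hall)
          have hx2 := hΦsmall k0 x hk0 i
          have hy2 := hΦsmall k1 y hk1 i
          have hsep := hξsep k0 k1 i hi
          obtain ⟨t, ht0, ht1, hz0, hz1⟩ := seg_aux hδ0 hδN hx2 hy2
            (by rw [show 2 * (1/(N:ℝ)) = 2/(N:ℝ) by ring]; exact hsep)
          set z : EuclideanSpace ℝ (Fin d) := x + t • (y - x) with hzdef
          have hzi : z i = x i + t * (y i - x i) := by
            rw [hzdef]
            simp only [PiLp.add_apply, PiLp.smul_apply, PiLp.sub_apply, smul_eq_mul]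
          have hΦ0z : Φ k0 z = 0 := hΦzero k0 z ⟨i, by rw [hzi]; exact hz0⟩
          have hΦ1z : Φ k1 z = 0 := hΦzero k1 z ⟨i, by rw [hzi]; exact hz1⟩
          have hxz : ‖x - z‖ = t * ‖x - y‖ := by
            have hxy : x - z = t • (x - y) := by rw [hzdef]; module
            rw [hxy, norm_smul, Real.norm_eq_abs, abs_of_nonneg ht0]
          have hzy : ‖y - z‖ = (1 - t) * ‖x - y‖ := by
            have hyz : y - z = (1 - t) • (y - x) := by rw [hzdef]; module
            rw [hyz, norm_smul, Real.norm_eq_abs, abs_of_nonneg (by linarith),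
              norm_sub_rev]
          have hbx : |Φ k0 x| ≤ C * ((N:ℝ) ^ v * (t * ‖x - y‖) ^ v) := by
            have h1 := hΦH k0 x z
            rw [hΦ0z, sub_zero, hxz] at h1
            exact h1
          have hby : |Φ k1 y| ≤ C * ((N:ℝ) ^ v * ((1 - t) * ‖x - y‖) ^ v) := by
            have h1 := hΦH k1 y z
            rw [hΦ1z, sub_zero, hzy] at h1
            exact h1
          calc |(e k0 * κ) * (c2 * Φ k0 x) - (e k1 * κ) * (c2 * Φ k1 y)|
              ≤ |(e k0 * κ) * (c2 * Φ k0 x)| + |(e k1 * κ) * (c2 * Φ k1 y)| := abs_sub _ _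
            _ = κ * c2 * |Φ k0 x| + κ * c2 * |Φ k1 y| := by
                rw [habs k0, habs k1]
            _ ≤ κ * c2 * (C * ((N:ℝ) ^ v * (t * ‖x - y‖) ^ v))
                + κ * c2 * (C * ((N:ℝ) ^ v * ((1 - t) * ‖x - y‖) ^ v)) := by
                have hp : (0:ℝ) ≤ κ * c2 := by positivity
                exact add_le_add (mul_le_mul_of_nonneg_left hbx hp)
                  (mul_le_mul_of_nonneg_left hby hp)
            _ = C * (κ * c2 * (N:ℝ) ^ v) * ((t * ‖x - y‖) ^ v + ((1 - t) * ‖x - y‖) ^ v) := by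
                ring
            _ = C * ((t * ‖x - y‖) ^ v + ((1 - t) * ‖x - y‖) ^ v) := by rw [hκc2Nv]; ring
            _ = C * (t ^ v + (1 - t) ^ v) * ‖x - y‖ ^ v := by
                rw [Real.mul_rpow ht0 (norm_nonneg _),
                  Real.mul_rpow (by linarith) (norm_nonneg _)]
                ring
            _ ≤ C * 2 ^ (1 - v) * ‖x - y‖ ^ v := by
                apply mul_le_mul_of_nonneg_right ?_ hrpow0
                exact mul_le_mul_of_nonneg_left (rpow_concave_bound hv hv1 ht0 ht1) hC0.le
            _ = c0 * ‖x - y‖ ^ v := by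
                rw [hCdef, show c0 * 2 ^ (v-1) * 2 ^ (1-v) = c0 * (2 ^ (v-1) * 2 ^ (1-v) : ℝ)
                  by ring, ← Real.rpow_add two_pos, show v - 1 + (1 - v) = 0 by ring,
                  Real.rpow_zero, mul_one]
      · push_neg at hy1
        rw [hsum_active x k0 hk0, hsum_zero y hy1, sub_zero, habs k0]
        exact hsingle k0 x y (hy1 k0)
    · push_neg at hx1
      by_cases hy1 : ∃ k1, Φ k1 y ≠ 0
      · obtain ⟨k1, hk1⟩ := hy1
        rw [hsum_active y k1 hk1, hsum_zero x hx1, zero_sub, abs_neg, habs k1]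
        calc κ * c2 * |Φ k1 y| ≤ c0 * ‖y - x‖ ^ v := hsingle k1 y x (hx1 k1)
          _ = c0 * ‖x - y‖ ^ v := by rw [norm_sub_rev]
      · push_neg at hy1
        rw [hsum_zero x hx1, hsum_zero y hy1, sub_zero, abs_zero]
        positivity

end
end

section
/- Let N* ∈ ℕ and let {A_k}, {ξ_k}, g and g_k be as in the bump-function construction. If ε, ε′ ∈ {−1,1}^{(N*)^d} satisfy Σ_{k=1}^{(N*)^d} |ε_k − ε′_k| ≥ (N*)^d / 2, then the functions f := Σ_k ε_k g_k and f_1 := Σ_k ε′_k g_k satisfy ‖f − f_1‖_{L^1(𝕀^d)} ≥ (1/2) · d^{−d/2} · (N*)^{−r}. -/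
open MeasureTheory

noncomputable section

/-- The `L¹(𝕀^d)` distance between two functions on the cube. -/
def L1dist {d : ℕ} (f g : EuclideanSpace ℝ (Fin d) → ℝ) : ℝ :=
  ∫ x in cube d, |f x - g x|

lemma aux_nat_abs_ge_one {a b : ℕ} (h : a ≠ b) : (1 : ℝ) ≤ |(a : ℝ) - (b : ℝ)| := by
  rcases lt_or_gt_of_ne h with h1 | h1
  · have : (a : ℝ) + 1 ≤ b := by exact_mod_cast Nat.succ_le_of_lt h1
    rw [abs_sub_comm, abs_of_nonneg (by linarith)]; linarith
  · have : (b : ℝ) + 1 ≤ a := by exact_mod_cast Nat.succ_le_of_lt h1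
    rw [abs_of_nonneg (by linarith)]; linarith

set_option maxHeartbeats 2000000 in
/-- Lemma 6 of the paper: if two sign vectors `ε, ε'` satisfy
`Σ_k |ε_k - ε'_k| ≥ N^d/2`, then the corresponding functions `f = Σ_k ε_k g_k` and
`f₁ = Σ_k ε'_k g_k` of the bump-function construction satisfy
`‖f - f₁‖_{L¹(𝕀^d)} ≥ (1/2) d^{-d/2} N^{-r}`. -/
theorem stmt10 (d s N : ℕ) (hd : 1 ≤ d) (hN : 1 ≤ N) (v c0 r : ℝ) (hv : 0 < v)
    (hv1 : v ≤ 1) (hc0 : 0 < c0) (hr : r = s + v)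
    (g : EuclideanSpace ℝ (Fin d) → ℝ)
    (hg_smooth : ContDiff ℝ s g)
    (hg_supp : ∀ x, g x ≠ 0 → ∀ i, |x i| ≤ 1 / Real.sqrt d)
    (hg_one : ∀ x : EuclideanSpace ℝ (Fin d),
      (∀ i, |x i| ≤ 1 / (2 * Real.sqrt d)) → g x = 1)
    (hg_holder : ∀ l : List (Fin d), l.length = s →
      ∀ x y : EuclideanSpace ℝ (Fin d),
        |iterPD l g x - iterPD l g y| ≤ c0 * (2 : ℝ) ^ (v - 1) * ‖x - y‖ ^ v)
    (e e' : (Fin d → Fin N) → ℝ)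
    (he : ∀ k, e k = 1 ∨ e k = -1) (he' : ∀ k, e' k = 1 ∨ e' k = -1)
    (hsep : ((N : ℝ) ^ d) / 2 ≤ ∑ k : Fin d → Fin N, |e k - e' k|) :
    (1 / 2) * (d : ℝ) ^ (-(d : ℝ) / 2) * (N : ℝ) ^ (-r) ≤
      L1dist (fun x => ∑ k : Fin d → Fin N, e k * bumpAt d N r g k x)
        (fun x => ∑ k : Fin d → Fin N, e' k * bumpAt d N r g k x) := by
  classical
  have hd0 : (0 : ℝ) < d := by exact_mod_cast hd
  have hN0 : (0 : ℝ) < N := by exact_mod_cast hN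
  set sd : ℝ := Real.sqrt d with hsd
  have hsd1 : 1 ≤ sd := by
    rw [hsd, show (1:ℝ) = Real.sqrt 1 by simp]
    exact Real.sqrt_le_sqrt (by exact_mod_cast hd)
  have hsd0 : 0 < sd := lt_of_lt_of_le one_pos hsd1
  set h : ℝ := 1 / (2 * N * sd) with hh
  have hh0 : 0 < h := by positivity
  have h2h : 2 * h ≤ 1 / N := by
    rw [hh, mul_one_div, div_le_div_iff₀ (by positivity) hN0]
    nlinarith
  have hNh : (N : ℝ) * h = 1 / (2 * sd) := by
    rw [hh]; field_simp
  set c : ℝ := (N : ℝ) ^ (-r) with hc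
  have hcpos : 0 < c := Real.rpow_pos_of_pos hN0 _
  -- abbreviation for the integrand
  set F : EuclideanSpace ℝ (Fin d) → ℝ :=
    fun x => |∑ j : Fin d → Fin N, (e j - e' j) * bumpAt d N r g j x| with hF
  -- the boxes B k
  set B : (Fin d → Fin N) → Set (EuclideanSpace ℝ (Fin d)) := fun k =>
    (MeasurableEquiv.toLp 2 (Fin d → ℝ)).symm ⁻¹'
      (Set.univ.pi fun i => Set.Icc (ξ d N k i - h) (ξ d N k i + h)) with hB
  have hmem : ∀ k x, x ∈ B k ↔ ∀ i, |x i - ξ d N k i| ≤ h := by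
    intro k x
    simp only [hB, Set.mem_preimage, Set.mem_pi, Set.mem_univ, forall_true_left,
      Set.mem_Icc]
    have hE : ∀ i, (MeasurableEquiv.toLp 2 (Fin d → ℝ)).symm x i = x i := fun _ => rfl
    simp only [hE]
    constructor
    · intro H i
      have := H i
      rw [abs_le]
      exact ⟨by linarith [this.1], by linarith [this.2]⟩
    · intro H i
      have := abs_le.1 (H i)
      exact ⟨by linarith [this.1], by linarith [this.2]⟩
  have hBmeas : ∀ k, MeasurableSet (B k) :=
    fun k => (MeasurableEquiv.toLp 2 (Fin d → ℝ)).symm.measurable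
      (MeasurableSet.univ_pi fun i => measurableSet_Icc)
  have hvol : ∀ k, volume (B k) = ENNReal.ofReal (2 * h) ^ d := by
    intro k
    rw [hB]
    rw [(EuclideanSpace.volume_preserving_symm_measurableEquiv_toLp (Fin d)).measure_preimage
      ((MeasurableSet.univ_pi fun i => measurableSet_Icc).nullMeasurableSet),
      volume_pi_pi]
    simp only [Real.volume_Icc]
    have harg : ∀ i : Fin d, ξ d N k i + h - (ξ d N k i - h) = 2 * h := fun i => by ring
    simp only [harg]
    rw [Finset.prod_const, Finset.card_univ, Fintype.card_fin]
  -- bounds on the centers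
  have hξ : ∀ (k : Fin d → Fin N) (i : Fin d), |ξ d N k i| ≤ 1 - 1 / N := by
    intro k i
    have hki : ((k i : ℕ) : ℝ) ≤ (N : ℝ) - 1 := by
      have h1 := (k i).isLt
      have h2 : ((k i : ℕ) : ℝ) + 1 ≤ N := by exact_mod_cast Nat.succ_le_of_lt h1
      linarith
    have hk0 : (0 : ℝ) ≤ ((k i : ℕ) : ℝ) := Nat.cast_nonneg _
    have hξdef : ξ d N k i = -1 + (2 * ((k i : ℕ) : ℝ) + 1) / N := rfl
    rw [hξdef, abs_le]
    constructor
    · have h1 : (1 : ℝ) / N ≤ (2 * ((k i : ℕ) : ℝ) + 1) / N := by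
        gcongr
        linarith
      linarith
    · have h1 : (2 * ((k i : ℕ) : ℝ) + 1) / N ≤ (2 * N - 1) / N := by
        gcongr
        linarith
      have h2 : (2 * (N : ℝ) - 1) / N = 2 - 1 / N := by field_simp
      linarith [h2 ▸ h1]
  -- the boxes are inside the cube
  have hBsub : ∀ k, B k ⊆ cube d := by
    intro k x hx i
    have h1 := (hmem k x).1 hx i
    have h2 := hξ k i
    have h3 : |x i| ≤ |x i - ξ d N k i| + |ξ d N k i| := by
      have := abs_add_le (x i - ξ d N k i) (ξ d N k i)
      simpa using this
    linarith
  -- separation of distinct centers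
  have hξsep : ∀ (j k : Fin d → Fin N) (i : Fin d), j i ≠ k i →
      2 / N ≤ |ξ d N j i - ξ d N k i| := by
    intro j k i hi
    have hdiff : ξ d N j i - ξ d N k i = 2 * (((j i : ℕ) : ℝ) - ((k i : ℕ) : ℝ)) / N := by
      have e1 : ξ d N j i = -1 + (2 * ((j i : ℕ) : ℝ) + 1) / N := rfl
      have e2 : ξ d N k i = -1 + (2 * ((k i : ℕ) : ℝ) + 1) / N := rfl
      rw [e1, e2]; field_simp; ring
    have hne : (j i : ℕ) ≠ (k i : ℕ) := fun hcon => hi (Fin.val_injective hcon)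
    have h1 := aux_nat_abs_ge_one hne
    rw [hdiff, abs_div, abs_of_pos hN0, abs_mul, abs_of_pos (by norm_num : (0:ℝ) < 2)]
    rw [div_le_div_iff₀ hN0 hN0]
    nlinarith
  -- the boxes are pairwise disjoint
  have hdisj : ∀ j k : Fin d → Fin N, j ≠ k → Disjoint (B j) (B k) := by
    intro j k hjk
    rw [Set.disjoint_left]
    intro x hxj hxk
    obtain ⟨i, hi⟩ : ∃ i, j i ≠ k i := by
      by_contra hcon; push_neg at hcon; exact hjk (funext hcon)
    have h1 := (hmem j x).1 hxj i
    have h2 := (hmem k x).1 hxk i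
    have h3 := hξsep j k i hi
    have h4 : |ξ d N j i - ξ d N k i| ≤ |ξ d N j i - x i| + |x i - ξ d N k i| :=
      abs_sub_le _ _ _
    rw [abs_sub_comm (ξ d N j i) (x i)] at h4
    have h5 : (1 : ℝ) / N < 2 / N := by
      rw [div_lt_div_iff₀ hN0 hN0]; nlinarith
    linarith
  -- value of the bumps on the boxes
  have hbump_self : ∀ k x, x ∈ B k → bumpAt d N r g k x = c := by
    intro k x hx
    have hg1 : g ((N : ℝ) • (x - ξ d N k)) = 1 := by
      apply hg_one
      intro i
      have hxi := (hmem k x).1 hx i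
      have hcoord : ((N : ℝ) • (x - ξ d N k)) i = N * (x i - ξ d N k i) := rfl
      rw [hcoord, abs_mul, abs_of_pos hN0]
      calc (N : ℝ) * |x i - ξ d N k i| ≤ N * h :=
            mul_le_mul_of_nonneg_left hxi hN0.le
        _ = 1 / (2 * sd) := hNh
    simp only [bumpAt, hg1, mul_one, hc]
  have hbump_other : ∀ j k x, x ∈ B k → j ≠ k → bumpAt d N r g j x = 0 := by
    intro j k x hx hjk
    suffices hgz : g ((N : ℝ) • (x - ξ d N j)) = 0 by
      simp only [bumpAt, hgz, mul_zero]
    by_contra hne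
    obtain ⟨i, hi⟩ : ∃ i, j i ≠ k i := by
      by_contra hcon; push_neg at hcon; exact hjk (funext hcon)
    have hs := hg_supp _ hne i
    have hcoord : ((N : ℝ) • (x - ξ d N j)) i = N * (x i - ξ d N j i) := rfl
    rw [hcoord, abs_mul, abs_of_pos hN0] at hs
    have h1 : |x i - ξ d N k i| ≤ h := (hmem k x).1 hx i
    have h3 := hξsep j k i hi
    have h4 : |ξ d N j i - ξ d N k i| ≤ |x i - ξ d N j i| + |x i - ξ d N k i| := by
      have := abs_sub_le (ξ d N j i) (x i) (ξ d N k i)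
      rw [abs_sub_comm (ξ d N j i) (x i)] at this
      exact this
    have h5 : 2 / N - h ≤ |x i - ξ d N j i| := by linarith
    have h6 : (N : ℝ) * (2 / N - h) ≤ N * |x i - ξ d N j i| :=
      mul_le_mul_of_nonneg_left h5 hN0.le
    have h7 : (N : ℝ) * (2 / N - h) = 2 - 1 / (2 * sd) := by
      rw [mul_sub, hNh]; field_simp
    have h8 : (1 : ℝ) / sd ≤ 1 := by
      rw [div_le_one hsd0]; exact hsd1
    have h9 : (1 : ℝ) / (2 * sd) ≤ 1 / 2 := by
      rw [div_le_div_iff₀ (by positivity) (by norm_num)]; nlinarith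
    linarith
  -- value of the integrand on the boxes
  have hFval : ∀ k x, x ∈ B k →
      (∑ j : Fin d → Fin N, (e j - e' j) * bumpAt d N r g j x) = (e k - e' k) * c := by
    intro k x hx
    rw [Finset.sum_eq_single k]
    · rw [hbump_self k x hx]
    · intro j _ hj; rw [hbump_other j k x hx hj, mul_zero]
    · intro hk; exact absurd (Finset.mem_univ k) hk
  -- continuity and integrability
  have hgc : Continuous g := hg_smooth.continuous
  have hFcont : Continuous F := by
    apply Continuous.abs
    apply continuous_finset_sum
    intro j _
    simp only [bumpAt]
    exact continuous_const.mul (continuous_const.mul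
      (hgc.comp (by fun_prop)))
  have hcc : IsCompact (cube d) := by
    apply Metric.isCompact_of_isClosed_isBounded
    · have hcubeeq : cube d = ⋂ i, (fun x : EuclideanSpace ℝ (Fin d) => |x i|) ⁻¹' Set.Iic 1 := by
        ext x; simp [cube, Set.mem_iInter]
      rw [hcubeeq]
      refine isClosed_iInter fun i => IsClosed.preimage ?_ isClosed_Iic
      exact ((EuclideanSpace.proj (𝕜 := ℝ) (ι := Fin d) i).continuous).abs
    · apply Bornology.IsBounded.subset (Metric.isBounded_closedBall (x := 0) (r := sd))
      intro x hx
      rw [Metric.mem_closedBall, dist_zero_right, EuclideanSpace.norm_eq, hsd]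
      apply Real.sqrt_le_sqrt
      calc ∑ i, ‖x i‖ ^ 2 ≤ ∑ _i : Fin d, (1 : ℝ) := by
            apply Finset.sum_le_sum
            intro i _
            have := hx i
            rw [Real.norm_eq_abs]
            nlinarith [abs_nonneg (x i)]
        _ = d := by simp
  have hFint : IntegrableOn F (cube d) :=
    hFcont.locallyIntegrable.integrableOn_isCompact hcc
  -- the set of differing indices
  set D : Finset (Fin d → Fin N) := Finset.univ.filter (fun k => e k ≠ e' k) with hD
  have habs2 : ∀ k, |e k - e' k| = if e k ≠ e' k then 2 else 0 := by
    intro k; rcases he k with h1 | h1 <;> rcases he' k with h2 | h2 <;>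
      rw [h1, h2] <;> norm_num
  have hcard : ((N : ℝ) ^ d) / 4 ≤ D.card := by
    have hsum : (∑ k : Fin d → Fin N, |e k - e' k|) = 2 * D.card := by
      calc (∑ k : Fin d → Fin N, |e k - e' k|)
          = ∑ k : Fin d → Fin N, (if e k ≠ e' k then (2:ℝ) else 0) :=
            Finset.sum_congr rfl fun k _ => habs2 k
        _ = ∑ _k ∈ D, (2:ℝ) := (Finset.sum_filter _ _).symm
        _ = 2 * D.card := by rw [Finset.sum_const, nsmul_eq_mul]; ring
    rw [hsum] at hsep
    linarith
  -- each box integral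
  have key : ∀ k ∈ D, ∫ x in B k, F x = (2 * h) ^ d * (2 * c) := by
    intro k hk
    have heq : Set.EqOn F (fun _ => 2 * c) (B k) := by
      intro x hx
      have hek : |e k - e' k| = 2 := by
        rw [habs2 k, if_pos (Finset.mem_filter.1 hk).2]
      simp only [hF, hFval k x hx, abs_mul, abs_of_pos hcpos, hek]
    rw [setIntegral_congr_fun (hBmeas k) heq, setIntegral_const, measureReal_def, hvol k,
      ENNReal.toReal_pow, ENNReal.toReal_ofReal (by positivity), smul_eq_mul]
  -- main chain
  have hchain : (D.card : ℝ) * ((2 * h) ^ d * (2 * c)) ≤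
      ∫ x in cube d, F x := by
    calc (D.card : ℝ) * ((2 * h) ^ d * (2 * c))
        = ∑ k ∈ D, ∫ x in B k, F x := by
          rw [Finset.sum_congr rfl key, Finset.sum_const, nsmul_eq_mul]
      _ = ∫ x in ⋃ k ∈ D, B k, F x := by
          rw [integral_biUnion_finset D (fun k _ => hBmeas k)
            (fun j _ k _ hjk => hdisj j k hjk)
            (fun k _ => hFint.mono_set (hBsub k))]
      _ ≤ ∫ x in cube d, F x := by
          apply setIntegral_mono_set hFint
            (Filter.Eventually.of_forall fun x => abs_nonneg _)
          exact HasSubset.Subset.eventuallyLE (Set.iUnion₂_subset fun k _ => hBsub k)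
  -- identify the L¹ distance
  have hL1 : L1dist (fun x => ∑ k : Fin d → Fin N, e k * bumpAt d N r g k x)
      (fun x => ∑ k : Fin d → Fin N, e' k * bumpAt d N r g k x)
      = ∫ x in cube d, F x := by
    have hpt : ∀ x : EuclideanSpace ℝ (Fin d),
        (∑ k : Fin d → Fin N, e k * bumpAt d N r g k x) -
          (∑ k : Fin d → Fin N, e' k * bumpAt d N r g k x)
        = ∑ j : Fin d → Fin N, (e j - e' j) * bumpAt d N r g j x := by
      intro x
      rw [← Finset.sum_sub_distrib]
      exact Finset.sum_congr rfl fun k _ => (sub_mul _ _ _).symm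
    unfold L1dist
    congr 1
    funext x
    rw [hpt x]
  rw [hL1]
  refine le_trans ?_ hchain
  -- final arithmetic
  have hsdd : sd ^ d = (d : ℝ) ^ ((d : ℝ) / 2) := by
    rw [hsd, Real.sqrt_eq_rpow, ← Real.rpow_natCast ((d:ℝ) ^ ((1:ℝ)/2)) d,
      ← Real.rpow_mul hd0.le]
    congr 1; ring
  have hneg : (d : ℝ) ^ (-(d : ℝ) / 2) = (sd ^ d)⁻¹ := by
    rw [hsdd, ← Real.rpow_neg hd0.le]
    congr 1; ring
  have h2hval : 2 * h = ((N : ℝ) * sd)⁻¹ := by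
    rw [hh]; field_simp
  have hKpos : (0 : ℝ) ≤ (2 * h) ^ d * (2 * c) := by positivity
  have heqkey : (1 / 2) * (d : ℝ) ^ (-(d : ℝ) / 2) * c
      = ((N : ℝ) ^ d / 4) * ((2 * h) ^ d * (2 * c)) := by
    rw [hneg, h2hval, inv_pow, mul_pow]
    have hNd : (0:ℝ) < (N:ℝ) ^ d := by positivity
    have hsdp : (0:ℝ) < sd ^ d := by positivity
    field_simp
    ring
  rw [heqkey]
  exact mul_le_mul_of_nonneg_right hcard hKpos
end
end
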